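/- For every a ∈ 𝒜 one has Δ(S(a)) = (S⊗S)(c(Δ(a))), i.e. Δ ∘ S = (S⊗S) ∘ c ∘ Δ as maps 𝒜 → 𝒜 ⊗_ℂ 𝒜. -/

import Mathlib

open scoped TensorProduct

noncomputable section

/-- The monomial family `α^n γ^m (γ*)^k` (for `n ≥ 0`) resp. `(α*)^{-n} γ^m (γ*)^k`
(for `n < 0`), indexed by `(n, m, k) ∈ ℤ × ℕ × ℕ`. -/
def suqMono {A : Type*} [Ring A] [StarRing A] (a g : A) (i : ℤ × ℕ × ℕ) : A :=
  (if 0 ≤ i.1 then a ^ i.1.toNat else (star a) ^ (-i.1).toNat) * g ^ i.2.1 * (star g) ^ i.2.2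

/-- The degree-`p` homogeneous component `𝒜_p`: the `ℂ`-span of the basis monomials with
`m - k = p`. -/
def suqHomog {A : Type*} [Ring A] [Algebra ℂ A] [StarRing A] (a g : A) (p : ℤ) :
    Submodule ℂ A :=
  Submodule.span ℂ
    {x | ∃ i : ℤ × ℕ × ℕ, (i.2.1 : ℤ) - (i.2.2 : ℤ) = p ∧ x = suqMono a g i}

/-- The defining relations of `Pol(SU_q(2))`. -/
def SUqRel {A : Type*} [Ring A] [Algebra ℂ A] [StarRing A] (q : ℂ) (a g : A) : Prop :=
  star a * a + star g * g = 1 ∧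
  a * star a + ((‖q‖ : ℂ) ^ 2) • (star g * g) = 1 ∧
  g * star g = star g * g ∧
  a * g = (starRingEnd ℂ q) • (g * a) ∧
  a * star g = q • (star g * a)

/-- The monomials form a `ℂ`-basis. -/
def SUqBasis {A : Type*} [Ring A] [Algebra ℂ A] [StarRing A] (a g : A) : Prop :=
  LinearIndependent ℂ (suqMono a g) ∧
  Submodule.span ℂ (Set.range (suqMono a g)) = ⊤

/-- The characterizing properties of the antipode `S`. -/
def SUqAntipode {A : Type*} [Ring A] [Algebra ℂ A] [StarRing A] (q : ℂ) (a g : A)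
    (S : A →ₗ[ℂ] A) : Prop :=
  S 1 = 1 ∧ S a = star a ∧ S (star a) = a ∧
  S g = (-(starRingEnd ℂ q)) • g ∧ S (star g) = (-q⁻¹) • star g ∧
  (∀ p : ℤ, ∀ x ∈ suqHomog a g p, S x ∈ suqHomog a g p) ∧
  (∀ p r : ℤ, ∀ x ∈ suqHomog a g p, ∀ y ∈ suqHomog a g r,
    S (x * y) = ((q / starRingEnd ℂ q) ^ (-(p * r))) • (S y * S x))

/-- The braided multiplication on `𝒜 ⊗ 𝒜`. -/
def SUqBraidedMul {A : Type*} [Ring A] [Algebra ℂ A] [StarRing A] (q : ℂ) (a g : A)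
    (μ : A ⊗[ℂ] A →ₗ[ℂ] A ⊗[ℂ] A →ₗ[ℂ] A ⊗[ℂ] A) : Prop :=
  ∀ (x w : A) (r s : ℤ), ∀ y ∈ suqHomog a g r, ∀ z ∈ suqHomog a g s,
    μ (x ⊗ₜ[ℂ] y) (z ⊗ₜ[ℂ] w)
      = ((q / starRingEnd ℂ q) ^ (-(r * s))) • ((x * z) ⊗ₜ[ℂ] (y * w))

/-- The characterizing properties of the comultiplication `Δ` (as a unital algebra
homomorphism into the braided tensor square with multiplication `μ`). -/
def SUqComul {A : Type*} [Ring A] [Algebra ℂ A] [StarRing A] (q : ℂ) (a g : A)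
    (μ : A ⊗[ℂ] A →ₗ[ℂ] A ⊗[ℂ] A →ₗ[ℂ] A ⊗[ℂ] A) (Δ : A →ₗ[ℂ] A ⊗[ℂ] A) : Prop :=
  Δ 1 = 1 ⊗ₜ[ℂ] 1 ∧ (∀ x y : A, Δ (x * y) = μ (Δ x) (Δ y)) ∧
  Δ a = a ⊗ₜ[ℂ] a - q • ((star g) ⊗ₜ[ℂ] g) ∧
  Δ g = g ⊗ₜ[ℂ] a + (star a) ⊗ₜ[ℂ] g ∧
  Δ (star a) = (star a) ⊗ₜ[ℂ] (star a) - q • (g ⊗ₜ[ℂ] (star g)) ∧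
  Δ (star g) = (star g) ⊗ₜ[ℂ] (star a) + a ⊗ₜ[ℂ] (star g)

/-- The braided flip `c` on `𝒜 ⊗ 𝒜`. -/
def SUqFlip {A : Type*} [Ring A] [Algebra ℂ A] [StarRing A] (q : ℂ) (a g : A)
    (c : A ⊗[ℂ] A →ₗ[ℂ] A ⊗[ℂ] A) : Prop :=
  ∀ (p r : ℤ), ∀ x ∈ suqHomog a g p, ∀ y ∈ suqHomog a g r,
    c (x ⊗ₜ[ℂ] y) = ((q / starRingEnd ℂ q) ^ (-(p * r))) • (y ⊗ₜ[ℂ] x)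

/-- The Haar functional, defined on the basis. -/
def SUqHaar {A : Type*} [Ring A] [Algebra ℂ A] [StarRing A] (q : ℂ) (a g : A)
    (h : A →ₗ[ℂ] ℂ) : Prop :=
  ∀ i : ℤ × ℕ × ℕ, h (suqMono a g i) =
    if i.1 = 0 ∧ i.2.1 = i.2.2
    then (1 - (‖q‖ : ℂ) ^ 2) / (1 - (‖q‖ : ℂ) ^ (2 * (i.2.1 + 1)))
    else 0

set_option linter.unusedSectionVars false

namespace SUqAux

variable {A : Type*} [Ring A] [Algebra ℂ A] [StarRing A] [StarModule ℂ A]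


variable {A : Type*} [Ring A] [Algebra ℂ A] [StarRing A] [StarModule ℂ A]
section Basic
variable (q : ℂ) (a g : A)

theorem mono_pos (t m k : ℕ) :
    a ^ t * g ^ m * (star g) ^ k = suqMono a g ((t : ℤ), m, k) := by
  simp [suqMono]

theorem mono_neg (t m k : ℕ) :
    (star a) ^ t * g ^ m * (star g) ^ k = suqMono a g (-(t : ℤ), m, k) := by
  rcases Nat.eq_zero_or_pos t with h | h
  · subst h; simp [suqMono]
  · have h1 : ¬ (0 ≤ -(t:ℤ)) := by omega
    simp [suqMono, h1]
    exact fun h0 => absurd h0 (by omega)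

theorem mono_mem (i : ℤ × ℕ × ℕ) :
    suqMono a g i ∈ suqHomog a g ((i.2.1 : ℤ) - i.2.2) :=
  Submodule.subset_span ⟨i, rfl, rfl⟩

theorem pos_mem {p : ℤ} (t m k : ℕ) (h : (m : ℤ) - k = p) :
    a ^ t * g ^ m * (star g) ^ k ∈ suqHomog a g p := by
  subst h; rw [mono_pos]
  exact Submodule.subset_span ⟨((t : ℤ), m, k), rfl, rfl⟩

theorem neg_mem {p : ℤ} (t m k : ℕ) (h : (m : ℤ) - k = p) :
    (star a) ^ t * g ^ m * (star g) ^ k ∈ suqHomog a g p := by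
  subst h; rw [mono_neg]
  exact Submodule.subset_span ⟨(-(t : ℤ), m, k), rfl, rfl⟩

theorem one_mem' : (1 : A) ∈ suqHomog a g 0 := by
  simpa using pos_mem a g 0 0 0 rfl

theorem a_mem : a ∈ suqHomog a g 0 := by
  simpa using pos_mem a g 1 0 0 rfl

theorem astar_mem : star a ∈ suqHomog a g 0 := by
  simpa using neg_mem a g 1 0 0 rfl

theorem g_mem : g ∈ suqHomog a g 1 := by
  simpa using pos_mem a g 0 1 0 rfl

theorem gstar_mem : star g ∈ suqHomog a g (-1) := by
  simpa using pos_mem a g 0 0 1 rfl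


end Basic

section Rel
variable {q : ℂ} {a g : A} (hrel : SUqRel q a g) (hq : q ≠ 0)
include hrel hq


omit hrel in
theorem hcq : (starRingEnd ℂ) q ≠ 0 := by
  simpa using hq

theorem g_a : g * a = ((starRingEnd ℂ) q)⁻¹ • (a * g) := by
  rw [hrel.2.2.2.1, smul_smul, inv_mul_cancel₀ (hcq hq), one_smul]

theorem gs_a : star g * a = q⁻¹ • (a * star g) := by
  rw [hrel.2.2.2.2, smul_smul, inv_mul_cancel₀ hq, one_smul]

theorem g_as : g * star a = ((starRingEnd ℂ) q) • (star a * g) := by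
  have := congrArg star hrel.2.2.2.2
  simp only [star_mul, star_smul, star_star] at this
  simpa using this

theorem gs_as : star g * star a = q • (star a * star g) := by
  have := congrArg star hrel.2.2.2.1
  simp only [star_mul, star_smul, star_star] at this
  simpa using this

theorem a_as : a * star a = 1 - ((‖q‖ : ℂ) ^ 2) • (star g * g) :=
  eq_sub_of_add_eq hrel.2.1

theorem as_a : star a * a = 1 - star g * g :=
  eq_sub_of_add_eq hrel.1

theorem ggs : Commute g (star g) := hrel.2.2.1

omit hrel hq in
theorem pow_comm_smul {c : ℂ} {x y : A} (h : y * x = c • (x * y)) (m : ℕ) :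
    y ^ m * x = c ^ m • (x * y ^ m) := by
  induction m with
  | zero => simp
  | succ n ih =>
    rw [pow_succ, mul_assoc, h, mul_smul_comm, ← mul_assoc, ih, smul_mul_assoc, smul_smul,
      pow_succ, mul_comm (c ^ n) c, mul_assoc x]

omit hrel hq in
theorem core_comm {c d : ℂ} {x : A} (hg : g * x = c • (x * g))
    (hgs : star g * x = d • (x * star g)) (m k : ℕ) :
    (g ^ m * (star g) ^ k) * x = (c ^ m * d ^ k) • (x * (g ^ m * (star g) ^ k)) := by
  rw [mul_assoc, pow_comm_smul hgs, mul_smul_comm, ← mul_assoc, pow_comm_smul hg,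
    smul_mul_assoc, smul_smul, mul_assoc x, mul_comm (d ^ k) (c ^ m)]

omit hrel hq in
theorem mono_mul_core {c d : ℂ} {x : A} (hg : g * x = c • (x * g))
    (hgs : star g * x = d • (x * star g)) (N : A) (m k : ℕ) :
    N * g ^ m * (star g) ^ k * x
      = (c ^ m * d ^ k) • (N * x * g ^ m * (star g) ^ k) := by
  rw [mul_assoc N, mul_assoc N, core_comm hg hgs, mul_smul_comm, ← mul_assoc N x,
    ← mul_assoc (N * x)]

theorem gsg_pow (m k : ℕ) :
    star g * g * (g ^ m * (star g) ^ k) = g ^ (m + 1) * (star g) ^ (k + 1) := by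
  have h1 : star g * g ^ (m + 1) = g ^ (m + 1) * star g := ((ggs hrel hq).symm.pow_right _)
  calc star g * g * (g ^ m * (star g) ^ k)
      = star g * (g * g ^ m) * (star g) ^ k := by rw [mul_assoc, mul_assoc, mul_assoc]
    _ = (g ^ (m + 1) * star g) * (star g) ^ k := by rw [← pow_succ', h1]
    _ = g ^ (m + 1) * (star g) ^ (k + 1) := by rw [mul_assoc, ← pow_succ']


theorem mul_a_mem {p : ℤ} {x : A} (hx : x ∈ suqHomog a g p) : x * a ∈ suqHomog a g p := by
  induction hx using Submodule.span_induction with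
  | mem y hy =>
    obtain ⟨⟨n, m, k⟩, hdeg, rfl⟩ := hy
    simp only at hdeg
    by_cases hn : 0 ≤ n
    · rw [suqMono]
      simp only [if_pos hn]
      rw [mono_mul_core (g_a hrel hq) (gs_a hrel hq)]
      refine Submodule.smul_mem _ _ ?_
      rw [← pow_succ]
      exact pos_mem a g _ m k hdeg
    · rw [suqMono]
      simp only [if_neg hn]
      rw [mono_mul_core (g_a hrel hq) (gs_a hrel hq)]
      refine Submodule.smul_mem _ _ ?_
      obtain ⟨s, hs⟩ : ∃ s, (-(n, m, k).1).toNat = s + 1 := ⟨(-n).toNat - 1, by omega⟩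
      rw [hs, pow_succ, mul_assoc ((star a) ^ s), as_a hrel hq, mul_sub, mul_one, sub_mul,
        sub_mul]
      refine Submodule.sub_mem _ (neg_mem a g s m k hdeg) ?_
      rw [mul_assoc ((star a) ^ s), mul_assoc ((star a) ^ s), mul_assoc (star g * g),
        gsg_pow hrel hq, ← mul_assoc]
      exact neg_mem a g s (m + 1) (k + 1) (by push_cast; omega)
  | zero => simpa using Submodule.zero_mem _
  | add x y _ _ ihx ihy => rw [add_mul]; exact Submodule.add_mem _ ihx ihy
  | smul c x _ ih => rw [smul_mul_assoc]; exact Submodule.smul_mem _ _ ih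

theorem mul_as_mem {p : ℤ} {x : A} (hx : x ∈ suqHomog a g p) :
    x * star a ∈ suqHomog a g p := by
  induction hx using Submodule.span_induction with
  | mem y hy =>
    obtain ⟨⟨n, m, k⟩, hdeg, rfl⟩ := hy
    simp only at hdeg
    by_cases hn : 0 ≤ n
    · rw [suqMono]
      simp only [if_pos hn]
      rw [mono_mul_core (g_as hrel hq) (gs_as hrel hq)]
      refine Submodule.smul_mem _ _ ?_
      rcases Nat.eq_zero_or_pos ((n, m, k).1.toNat) with h0 | h0
      · rw [h0, pow_zero, one_mul, ← pow_one (star a)]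
        exact neg_mem a g 1 m k hdeg
      · obtain ⟨s, hs⟩ : ∃ s, (n, m, k).1.toNat = s + 1 := ⟨(n, m, k).1.toNat - 1, by omega⟩
        rw [hs, pow_succ, mul_assoc (a ^ s), a_as hrel hq, mul_sub, mul_one, mul_smul_comm,
          sub_mul, sub_mul, smul_mul_assoc, smul_mul_assoc]
        refine Submodule.sub_mem _ (pos_mem a g s m k hdeg) (Submodule.smul_mem _ _ ?_)
        rw [mul_assoc (a ^ s), mul_assoc (a ^ s), mul_assoc (star g * g),
          gsg_pow hrel hq, ← mul_assoc]
        exact pos_mem a g s (m + 1) (k + 1) (by push_cast; omega)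
    · rw [suqMono]
      simp only [if_neg hn]
      rw [mono_mul_core (g_as hrel hq) (gs_as hrel hq)]
      refine Submodule.smul_mem _ _ ?_
      rw [← pow_succ]
      exact neg_mem a g _ m k hdeg
  | zero => simpa using Submodule.zero_mem _
  | add x y _ _ ihx ihy => rw [add_mul]; exact Submodule.add_mem _ ihx ihy
  | smul c x _ ih => rw [smul_mul_assoc]; exact Submodule.smul_mem _ _ ih

theorem mul_g_mem {p : ℤ} {x : A} (hx : x ∈ suqHomog a g p) :
    x * g ∈ suqHomog a g (p + 1) := by
  induction hx using Submodule.span_induction with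
  | mem y hy =>
    obtain ⟨⟨n, m, k⟩, hdeg, rfl⟩ := hy
    simp only at hdeg
    have hc : (star g) ^ ((n, m, k).2.2) * g = g * (star g) ^ ((n, m, k).2.2) :=
      ((ggs hrel hq).symm.pow_left _).eq
    rw [suqMono, mul_assoc _ ((star g) ^ _) g, hc, ← mul_assoc, mul_assoc _ (g ^ _) g,
      ← pow_succ]
    by_cases hn : 0 ≤ n
    · simp only [if_pos hn]
      exact pos_mem a g _ (m + 1) k (by push_cast; omega)
    · simp only [if_neg hn]
      exact neg_mem a g _ (m + 1) k (by push_cast; omega)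
  | zero => simpa using Submodule.zero_mem _
  | add x y _ _ ihx ihy => rw [add_mul]; exact Submodule.add_mem _ ihx ihy
  | smul c x _ ih => rw [smul_mul_assoc]; exact Submodule.smul_mem _ _ ih

theorem mul_gs_mem {p : ℤ} {x : A} (hx : x ∈ suqHomog a g p) :
    x * star g ∈ suqHomog a g (p - 1) := by
  induction hx using Submodule.span_induction with
  | mem y hy =>
    obtain ⟨⟨n, m, k⟩, hdeg, rfl⟩ := hy
    simp only at hdeg
    rw [suqMono, mul_assoc _ ((star g) ^ _) (star g), ← pow_succ]
    by_cases hn : 0 ≤ n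
    · simp only [if_pos hn]
      exact pos_mem a g _ m (k + 1) (by push_cast; omega)
    · simp only [if_neg hn]
      exact neg_mem a g _ m (k + 1) (by push_cast; omega)
  | zero => simpa using Submodule.zero_mem _
  | add x y _ _ ihx ihy => rw [add_mul]; exact Submodule.add_mem _ ihx ihy
  | smul c x _ ih => rw [smul_mul_assoc]; exact Submodule.smul_mem _ _ ih

theorem mul_pow_a_mem {p : ℤ} {x : A} (hx : x ∈ suqHomog a g p) (t : ℕ) :
    x * a ^ t ∈ suqHomog a g p := by
  induction t with
  | zero => simpa using hx
  | succ s ih => rw [pow_succ, ← mul_assoc]; exact mul_a_mem hrel hq ih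

theorem mul_pow_as_mem {p : ℤ} {x : A} (hx : x ∈ suqHomog a g p) (t : ℕ) :
    x * (star a) ^ t ∈ suqHomog a g p := by
  induction t with
  | zero => simpa using hx
  | succ s ih => rw [pow_succ, ← mul_assoc]; exact mul_as_mem hrel hq ih

theorem mul_pow_g_mem {p : ℤ} {x : A} (hx : x ∈ suqHomog a g p) (t : ℕ) :
    x * g ^ t ∈ suqHomog a g (p + t) := by
  induction t with
  | zero => simpa using hx
  | succ s ih =>
    rw [pow_succ, ← mul_assoc]
    have := mul_g_mem hrel hq ih
    rwa [show (p + (s : ℤ)) + 1 = p + ((s : ℕ) + 1 : ℕ) by push_cast; ring] at this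

theorem mul_pow_gs_mem {p : ℤ} {x : A} (hx : x ∈ suqHomog a g p) (t : ℕ) :
    x * (star g) ^ t ∈ suqHomog a g (p - t) := by
  induction t with
  | zero => simpa using hx
  | succ s ih =>
    rw [pow_succ, ← mul_assoc]
    have := mul_gs_mem hrel hq ih
    rwa [show (p - (s : ℤ)) - 1 = p - ((s : ℕ) + 1 : ℕ) by push_cast; ring] at this

theorem mul_mem_homog {p r : ℤ} {x y : A} (hx : x ∈ suqHomog a g p)
    (hy : y ∈ suqHomog a g r) : x * y ∈ suqHomog a g (p + r) := by
  induction hy using Submodule.span_induction with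
  | mem z hz =>
    obtain ⟨⟨n, m, k⟩, hdeg, rfl⟩ := hz
    simp only at hdeg
    rw [suqMono, ← mul_assoc, ← mul_assoc]
    have h1 : x * (if 0 ≤ (n, m, k).1 then a ^ (n, m, k).1.toNat
        else star a ^ (-(n, m, k).1).toNat) ∈ suqHomog a g p := by
      by_cases hn : 0 ≤ (n, m, k).1
      · rw [if_pos hn]; exact mul_pow_a_mem hrel hq hx _
      · rw [if_neg hn]; exact mul_pow_as_mem hrel hq hx _
    have h2 := mul_pow_gs_mem hrel hq (mul_pow_g_mem hrel hq h1 m) k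
    rwa [show p + (m : ℤ) - k = p + r by omega] at h2
  | zero => simpa using Submodule.zero_mem _
  | add y z _ _ ihy ihz => rw [mul_add]; exact Submodule.add_mem _ ihy ihz
  | smul c y _ ih => rw [mul_smul_comm]; exact Submodule.smul_mem _ _ ih

end Rel

section Main
variable {q : ℂ} {a g : A}
variable {μ : A ⊗[ℂ] A →ₗ[ℂ] A ⊗[ℂ] A →ₗ[ℂ] A ⊗[ℂ] A} {Δ : A →ₗ[ℂ] A ⊗[ℂ] A}
variable {S : A →ₗ[ℂ] A} {c : A ⊗[ℂ] A →ₗ[ℂ] A ⊗[ℂ] A}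

/-- The span of homogeneous pure tensors of total degree `p`. -/
def Tsub (a g : A) (p : ℤ) : Submodule ℂ (A ⊗[ℂ] A) :=
  Submodule.span ℂ {t | ∃ p1 p2 : ℤ, ∃ u v : A, p1 + p2 = p ∧ u ∈ suqHomog a g p1 ∧
    v ∈ suqHomog a g p2 ∧ t = u ⊗ₜ[ℂ] v}

theorem tmulT {p1 p2 p : ℤ} {u v : A} (hu : u ∈ suqHomog a g p1) (hv : v ∈ suqHomog a g p2)
    (hp : p1 + p2 = p) : u ⊗ₜ[ℂ] v ∈ Tsub a g p :=
  Submodule.subset_span ⟨p1, p2, u, v, hp, hu, hv, rfl⟩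

theorem muT (hrel : SUqRel q a g) (hq : q ≠ 0) (hμ : SUqBraidedMul q a g μ)
    {p r : ℤ} {X Y : A ⊗[ℂ] A} (hX : X ∈ Tsub a g p) (hY : Y ∈ Tsub a g r) :
    μ X Y ∈ Tsub a g (p + r) := by
  induction hX using Submodule.span_induction with
  | mem X' hX' =>
    obtain ⟨p1, p2, u, v, hp, hu, hv, rfl⟩ := hX'
    induction hY using Submodule.span_induction with
    | mem Y' hY' =>
      obtain ⟨r1, r2, y1, y2, hr, hy1, hy2, rfl⟩ := hY'
      rw [hμ u y2 p2 r1 v hv y1 hy1]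
      exact Submodule.smul_mem _ _ (tmulT (mul_mem_homog hrel hq hu hy1)
        (mul_mem_homog hrel hq hv hy2) (by omega))
    | zero => simp only [map_zero]; exact Submodule.zero_mem _
    | add Y1 Y2 _ _ ih1 ih2 =>
      rw [map_add]; exact Submodule.add_mem _ ih1 ih2
    | smul t Y1 _ ih =>
      rw [map_smul]; exact Submodule.smul_mem _ _ ih
  | zero => simp only [map_zero, LinearMap.zero_apply]; exact Submodule.zero_mem _
  | add X1 X2 _ _ ih1 ih2 =>
    rw [map_add, LinearMap.add_apply]; exact Submodule.add_mem _ ih1 ih2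
  | smul t X1 _ ih =>
    rw [map_smul, LinearMap.smul_apply]; exact Submodule.smul_mem _ _ ih

theorem key (hrel : SUqRel q a g) (hq : q ≠ 0) (hμ : SUqBraidedMul q a g μ)
    (hS : SUqAntipode q a g S) (hc : SUqFlip q a g c) {p r : ℤ} {X Y : A ⊗[ℂ] A}
    (hX : X ∈ Tsub a g p) (hY : Y ∈ Tsub a g r) :
    (TensorProduct.map S S) (c (μ X Y))
      = ((q / starRingEnd ℂ q) ^ (-(p * r))) •
        (μ ((TensorProduct.map S S) (c Y)) ((TensorProduct.map S S) (c X))) := by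
  have hz : (q / (starRingEnd ℂ) q) ≠ 0 := div_ne_zero hq (by simpa using hq)
  induction hX using Submodule.span_induction with
  | mem X' hX' =>
    obtain ⟨p1, p2, u, v, hp, hu, hv, rfl⟩ := hX'
    induction hY using Submodule.span_induction with
    | mem Y' hY' =>
      obtain ⟨r1, r2, y1, y2, hr, hy1, hy2, rfl⟩ := hY'
      subst hp; subst hr
      rw [hμ u y2 p2 r1 v hv y1 hy1, map_smul, map_smul,
        hc _ _ _ (mul_mem_homog hrel hq hu hy1) _ (mul_mem_homog hrel hq hv hy2),
        map_smul, TensorProduct.map_tmul,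
        hS.2.2.2.2.2.2 p2 r2 v hv y2 hy2, hS.2.2.2.2.2.2 p1 r1 u hu y1 hy1,
        hc r1 r2 y1 hy1 y2 hy2, hc p1 p2 u hu v hv]
      simp only [map_smul, LinearMap.smul_apply, TensorProduct.map_tmul]
      rw [hμ (S y2) (S u) r1 p2 (S y1) (hS.2.2.2.2.2.1 r1 y1 hy1) (S v)
        (hS.2.2.2.2.2.1 p2 v hv)]
      simp only [TensorProduct.smul_tmul', TensorProduct.tmul_smul, smul_smul,
        ← zpow_add₀ hz]
      congr 1
      ring
    | zero => simp
    | add Y1 Y2 hY1 hY2 ih1 ih2 =>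
      simp only [map_add, LinearMap.add_apply, ih1, ih2, smul_add]
    | smul t Y1 hY1 ih =>
      simp only [map_smul, LinearMap.smul_apply]
      rw [ih, smul_comm]
  | zero => simp
  | add X1 X2 hX1 hX2 ih1 ih2 =>
    simp only [map_add, LinearMap.add_apply, ih1, ih2, smul_add]
  | smul t X1 hX1 ih =>
    simp only [map_smul, LinearMap.smul_apply]
    rw [ih, smul_comm]

end Main

section Good
variable {q : ℂ} {a g : A}
variable {μ : A ⊗[ℂ] A →ₗ[ℂ] A ⊗[ℂ] A →ₗ[ℂ] A ⊗[ℂ] A} {Δ : A →ₗ[ℂ] A ⊗[ℂ] A}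
variable {S : A →ₗ[ℂ] A} {c : A ⊗[ℂ] A →ₗ[ℂ] A ⊗[ℂ] A}

/-- The master predicate: homogeneous of degree `p`, comultiplication lands in the right
graded part, and the antipode identity holds. -/
def Good (a g : A) (Δ : A →ₗ[ℂ] A ⊗[ℂ] A) (S : A →ₗ[ℂ] A)
    (c : A ⊗[ℂ] A →ₗ[ℂ] A ⊗[ℂ] A) (p : ℤ) (x : A) : Prop :=
  x ∈ suqHomog a g p ∧ Δ x ∈ Tsub a g p ∧ Δ (S x) = (TensorProduct.map S S) (c (Δ x))

theorem good_cast {p p' : ℤ} {x : A} (h : Good a g Δ S c p x) (hp : p = p') :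
    Good a g Δ S c p' x := hp ▸ h

variable (hrel : SUqRel q a g) (hq : q ≠ 0) (hμ : SUqBraidedMul q a g μ)
  (hΔ : SUqComul q a g μ Δ) (hS : SUqAntipode q a g S) (hc : SUqFlip q a g c)
include hrel hq hμ hΔ hS hc

theorem good_mul {p r : ℤ} {x y : A} (hx : Good a g Δ S c p x) (hy : Good a g Δ S c r y) :
    Good a g Δ S c (p + r) (x * y) := by
  obtain ⟨hx1, hx2, hx3⟩ := hx
  obtain ⟨hy1, hy2, hy3⟩ := hy
  refine ⟨mul_mem_homog hrel hq hx1 hy1, ?_, ?_⟩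
  · rw [hΔ.2.1]; exact muT hrel hq hμ hx2 hy2
  · rw [hS.2.2.2.2.2.2 p r x hx1 y hy1, map_smul, hΔ.2.1 (S y) (S x), hx3, hy3,
      ← key hrel hq hμ hS hc hx2 hy2, hΔ.2.1 x y]

theorem good_one : Good a g Δ S c 0 1 := by
  refine ⟨one_mem' a g, ?_, ?_⟩
  · rw [hΔ.1]; exact tmulT (one_mem' a g) (one_mem' a g) (by ring)
  · have h1 := hc 0 0 1 (one_mem' a g) 1 (one_mem' a g)
    norm_num at h1
    rw [hS.1, hΔ.1, h1, TensorProduct.map_tmul, hS.1]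

theorem good_a : Good a g Δ S c 0 a := by
  refine ⟨a_mem a g, ?_, ?_⟩
  · rw [hΔ.2.2.1]
    exact Submodule.sub_mem _ (tmulT (a_mem a g) (a_mem a g) (by ring))
      (Submodule.smul_mem _ _ (tmulT (gstar_mem a g) (g_mem a g) (by ring)))
  · rw [hS.2.1, hΔ.2.2.2.2.1, hΔ.2.2.1, map_sub, map_smul, map_sub, map_smul,
      hc 0 0 a (a_mem a g) a (a_mem a g),
      hc (-1) 1 (star g) (gstar_mem a g) g (g_mem a g)]
    simp only [map_smul, TensorProduct.map_tmul, hS.2.1, hS.2.2.2.1, hS.2.2.2.2.1,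
      TensorProduct.smul_tmul', TensorProduct.tmul_smul, smul_smul]
    norm_num
    congr 2
    have hcq' : (starRingEnd ℂ) q ≠ 0 := by simpa using hq
    field_simp

theorem good_as : Good a g Δ S c 0 (star a) := by
  refine ⟨astar_mem a g, ?_, ?_⟩
  · rw [hΔ.2.2.2.2.1]
    exact Submodule.sub_mem _ (tmulT (astar_mem a g) (astar_mem a g) (by ring))
      (Submodule.smul_mem _ _ (tmulT (g_mem a g) (gstar_mem a g) (by ring)))
  · rw [hS.2.2.1, hΔ.2.2.1, hΔ.2.2.2.2.1, map_sub, map_smul, map_sub, map_smul,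
      hc 0 0 (star a) (astar_mem a g) (star a) (astar_mem a g),
      hc 1 (-1) g (g_mem a g) (star g) (gstar_mem a g)]
    simp only [map_smul, TensorProduct.map_tmul, hS.2.2.1, hS.2.2.2.1, hS.2.2.2.2.1,
      TensorProduct.smul_tmul', TensorProduct.tmul_smul, smul_smul]
    norm_num
    congr 2
    have hcq' : (starRingEnd ℂ) q ≠ 0 := by simpa using hq
    field_simp

theorem good_g : Good a g Δ S c 1 g := by
  refine ⟨g_mem a g, ?_, ?_⟩
  · rw [hΔ.2.2.2.1]
    exact Submodule.add_mem _ (tmulT (g_mem a g) (a_mem a g) (by ring))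
      (tmulT (astar_mem a g) (g_mem a g) (by ring))
  · rw [hS.2.2.2.1, map_smul, hΔ.2.2.2.1, map_add, map_add,
      hc 1 0 g (g_mem a g) a (a_mem a g),
      hc 0 1 (star a) (astar_mem a g) g (g_mem a g)]
    simp only [map_smul, TensorProduct.map_tmul, hS.2.1, hS.2.2.1, hS.2.2.2.1,
      TensorProduct.smul_tmul', TensorProduct.tmul_smul, smul_smul]
    norm_num
    simp [TensorProduct.neg_tmul, TensorProduct.smul_tmul', add_comm]

theorem good_gs : Good a g Δ S c (-1) (star g) := by
  refine ⟨gstar_mem a g, ?_, ?_⟩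
  · rw [hΔ.2.2.2.2.2]
    exact Submodule.add_mem _ (tmulT (gstar_mem a g) (astar_mem a g) (by ring))
      (tmulT (a_mem a g) (gstar_mem a g) (by ring))
  · rw [hS.2.2.2.2.1, map_smul, hΔ.2.2.2.2.2, map_add, map_add,
      hc (-1) 0 (star g) (gstar_mem a g) (star a) (astar_mem a g),
      hc 0 (-1) a (a_mem a g) (star g) (gstar_mem a g)]
    simp only [map_smul, TensorProduct.map_tmul, hS.2.1, hS.2.2.1, hS.2.2.2.2.1,
      TensorProduct.smul_tmul', TensorProduct.tmul_smul, smul_smul]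
    norm_num
    simp [TensorProduct.neg_tmul, TensorProduct.smul_tmul', add_comm]

theorem good_pow_a : ∀ t : ℕ, Good a g Δ S c 0 (a ^ t) := by
  intro t
  induction t with
  | zero => rw [pow_zero]; exact good_one hrel hq hμ hΔ hS hc
  | succ s ih =>
    rw [pow_succ]
    exact good_cast (good_mul hrel hq hμ hΔ hS hc ih (good_a hrel hq hμ hΔ hS hc)) (by ring)

theorem good_pow_as : ∀ t : ℕ, Good a g Δ S c 0 ((star a) ^ t) := by
  intro t
  induction t with
  | zero => rw [pow_zero]; exact good_one hrel hq hμ hΔ hS hc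
  | succ s ih =>
    rw [pow_succ]
    exact good_cast (good_mul hrel hq hμ hΔ hS hc ih (good_as hrel hq hμ hΔ hS hc)) (by ring)

theorem good_pow_g : ∀ t : ℕ, Good a g Δ S c (t : ℤ) (g ^ t) := by
  intro t
  induction t with
  | zero => rw [pow_zero]; exact good_cast (good_one hrel hq hμ hΔ hS hc) (by norm_num)
  | succ s ih =>
    rw [pow_succ]
    exact good_cast (good_mul hrel hq hμ hΔ hS hc ih (good_g hrel hq hμ hΔ hS hc))
      (by push_cast; ring)

theorem good_pow_gs : ∀ t : ℕ, Good a g Δ S c (-(t : ℤ)) ((star g) ^ t) := by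
  intro t
  induction t with
  | zero => rw [pow_zero]; exact good_cast (good_one hrel hq hμ hΔ hS hc) (by norm_num)
  | succ s ih =>
    rw [pow_succ]
    exact good_cast (good_mul hrel hq hμ hΔ hS hc ih (good_gs hrel hq hμ hΔ hS hc))
      (by push_cast; ring)

theorem good_mono (i : ℤ × ℕ × ℕ) :
    Good a g Δ S c ((i.2.1 : ℤ) - i.2.2) (suqMono a g i) := by
  obtain ⟨n, m, k⟩ := i
  rw [suqMono]
  by_cases hn : 0 ≤ (n, m, k).1
  · rw [if_pos hn]
    refine good_cast (good_mul hrel hq hμ hΔ hS hc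
      (good_mul hrel hq hμ hΔ hS hc (good_pow_a hrel hq hμ hΔ hS hc _)
        (good_pow_g hrel hq hμ hΔ hS hc _)) (good_pow_gs hrel hq hμ hΔ hS hc _)) ?_
    push_cast; ring
  · rw [if_neg hn]
    refine good_cast (good_mul hrel hq hμ hΔ hS hc
      (good_mul hrel hq hμ hΔ hS hc (good_pow_as hrel hq hμ hΔ hS hc _)
        (good_pow_g hrel hq hμ hΔ hS hc _)) (good_pow_gs hrel hq hμ hΔ hS hc _)) ?_
    push_cast; ring

end Good


end SUqAux

set_option linter.unusedSectionVars true

/-- `Δ ∘ S = (S⊗S) ∘ c ∘ Δ` on `Pol(SU_q(2))`, where `c` is the braided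
flip. -/
theorem suq_comul_antipode {A : Type*} [Ring A] [Algebra ℂ A] [StarRing A] [StarModule ℂ A]
    (q : ℂ) (hq0 : 0 < ‖q‖) (hq1 : ‖q‖ < 1)
    (a g : A) (hrel : SUqRel q a g) (hbasis : SUqBasis a g)
    (μ : A ⊗[ℂ] A →ₗ[ℂ] A ⊗[ℂ] A →ₗ[ℂ] A ⊗[ℂ] A) (hμ : SUqBraidedMul q a g μ)
    (Δ : A →ₗ[ℂ] A ⊗[ℂ] A) (hΔ : SUqComul q a g μ Δ)
    (S : A →ₗ[ℂ] A) (hS : SUqAntipode q a g S)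
    (c : A ⊗[ℂ] A →ₗ[ℂ] A ⊗[ℂ] A) (hc : SUqFlip q a g c) :
    ∀ x : A, Δ (S x) = (TensorProduct.map S S) (c (Δ x)) := by
  intro x
  have hq : q ≠ 0 := by
    intro h
    rw [h] at hq0
    simp at hq0
  have hx : x ∈ Submodule.span ℂ (Set.range (suqMono a g)) := by
    rw [hbasis.2]; exact Submodule.mem_top
  induction hx using Submodule.span_induction with
  | mem y hy =>
    obtain ⟨i, rfl⟩ := hy
    exact (SUqAux.good_mono hrel hq hμ hΔ hS hc i).2.2
  | zero => simp
  | add u v _ _ ihu ihv => simp only [map_add, ihu, ihv]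
  | smul t u _ ih => simp only [map_smul, ih]
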